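/- If A is symmetric (A^T = A), then for each i ∈ {1,…,k}, the orthogonal space V_i^⊥ equals the direct sum ⊕_{j≠i} V_j of the remaining primary components. -/

import Mathlib

open Polynomial Matrix BigOperators

/-- The orthogonal space V^⟂ = {u : v ⬝ᵥ u = 0 for all v ∈ V} with respect to the standard
bilinear form ⟨u,v⟩ = uᵀv on F_p^n. -/
def orthC {p n : ℕ} (V : Submodule (ZMod p) (Fin n → ZMod p)) :
    Submodule (ZMod p) (Fin n → ZMod p) where
  carrier := {u | ∀ v ∈ V, v ⬝ᵥ u = 0}
  add_mem' := by
    intro a b ha hb v hv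
    simp [dotProduct_add, ha v hv, hb v hv]
  zero_mem' := by
    intro v hv
    simp
  smul_mem' := by
    intro c a ha v hv
    simp [dotProduct_smul, ha v hv]

lemma transpose_aeval_aux {R : Type*} [CommRing R] {m : ℕ} (A : Matrix (Fin m) (Fin m) R)
    (hA : Aᵀ = A) (q : R[X]) : (aeval A q)ᵀ = aeval A q := by
  induction q using Polynomial.induction_on' with
  | add f g hf hg => simp [map_add, Matrix.transpose_add, hf, hg]
  | monomial k c =>
    simp [aeval_monomial, Matrix.transpose_mul, Matrix.transpose_pow, hA,
      Algebra.algebraMap_eq_smul_one, Matrix.transpose_smul, Matrix.smul_mul,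
      Matrix.mul_smul, Matrix.one_mul, Matrix.mul_one]

theorem orth_primary_component_eq_supr {p n k : ℕ} (hp : p.Prime)
    (A : Matrix (Fin n) (Fin n) (ZMod p)) (hA : Aᵀ = A)
    (φ : Fin k → Polynomial (ZMod p)) (r : Fin k → ℕ)
    (hmon : ∀ i, (φ i).Monic) (hirr : ∀ i, Irreducible (φ i))
    (hinj : Function.Injective φ) (hr : ∀ i, 1 ≤ r i)
    (hchar : A.charpoly = ∏ i, φ i ^ r i) (i : Fin k) :
    orthC (LinearMap.ker (Matrix.toLin' (Polynomial.aeval A (φ i ^ r i)))) =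
      ⨆ (j : Fin k) (_ : j ≠ i),
        LinearMap.ker (Matrix.toLin' (Polynomial.aeval A (φ j ^ r j))) := by
  haveI := Fact.mk hp
  let F := ZMod p
  set f : Module.End F (Fin n → F) := Matrix.toLin' A with hf
  -- aeval compatibility
  have heq : ∀ q : F[X], aeval f q = Matrix.toLin' (aeval A q) := by
    intro q
    have e : ∀ M : Matrix (Fin n) (Fin n) F, Matrix.toLin' M = Matrix.toLinAlgEquiv' M := by
      intro M; ext v; simp [Matrix.toLin'_apply, Matrix.toLinAlgEquiv'_apply]
    rw [hf, e, e, Polynomial.aeval_algEquiv]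
    rfl
  -- coprimality
  have hcop : ∀ j l : Fin k, j ≠ l → IsCoprime (φ j ^ r j) (φ l ^ r l) := by
    intro j l hjl
    refine IsCoprime.pow ?_
    rw [(hirr j).coprime_iff_not_dvd]
    intro hdvd
    exact hjl (hinj (Polynomial.eq_of_monic_of_associated (hmon j) (hmon l)
      ((hirr j).associated_of_dvd (hirr l) hdvd)))
  -- sup of kernels over a finset
  have hsup : ∀ s : Finset (Fin k),
      LinearMap.ker (aeval f (∏ j ∈ s, φ j ^ r j)) =
        ⨆ j ∈ s, LinearMap.ker (aeval f (φ j ^ r j)) := by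
    intro s
    induction s using Finset.induction_on with
    | empty => simp [Module.End.one_eq_id]
    | @insert a s ha ih =>
      have hc : IsCoprime (φ a ^ r a) (∏ j ∈ s, φ j ^ r j) :=
        IsCoprime.prod_right fun j hj => hcop a j (by rintro rfl; exact ha hj)
      rw [Finset.prod_insert ha, ← Polynomial.sup_ker_aeval_eq_ker_aeval_mul_of_coprime f hc,
        ih, Finset.iSup_insert]
  -- Cayley-Hamilton: kernel of whole product is ⊤
  have htop : LinearMap.ker (aeval f (∏ j, φ j ^ r j)) = ⊤ := by
    rw [← hchar, heq, Matrix.aeval_self_charpoly]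
    simp
  -- the complementary polynomial
  set P := φ i ^ r i with hP
  set Q := ∏ j ∈ Finset.univ.erase i, φ j ^ r j with hQ
  have hPQ : P * Q = ∏ j, φ j ^ r j := by
    rw [hP, hQ]; exact Finset.mul_prod_erase Finset.univ (fun j => φ j ^ r j) (Finset.mem_univ i)
  have hQcop : IsCoprime P Q := by
    rw [hP, hQ]
    exact IsCoprime.prod_right fun j hj => hcop i j (Ne.symm (Finset.mem_erase.mp hj).1)
  have hsuptop : LinearMap.ker (aeval f P) ⊔ LinearMap.ker (aeval f Q) = ⊤ := by
    rw [Polynomial.sup_ker_aeval_eq_ker_aeval_mul_of_coprime f hQcop, hPQ, htop]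
  have hdisj : Disjoint (LinearMap.ker (aeval f P)) (LinearMap.ker (aeval f Q)) :=
    Polynomial.disjoint_ker_aeval_of_isCoprime f hQcop
  -- the RHS equals ker (aeval f Q)
  have hRHS : (⨆ (j : Fin k) (_ : j ≠ i),
      LinearMap.ker (Matrix.toLin' (aeval A (φ j ^ r j)))) = LinearMap.ker (aeval f Q) := by
    rw [hQ, hsup]
    apply le_antisymm
    · refine iSup₂_le fun j hj => ?_
      have : j ∈ Finset.univ.erase i := Finset.mem_erase.mpr ⟨hj, Finset.mem_univ j⟩
      exact (heq (φ j ^ r j)).symm ▸ le_iSup₂ (f := fun j _ =>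
        LinearMap.ker (aeval f (φ j ^ r j))) j this
    · refine iSup₂_le fun j hj => ?_
      exact (heq (φ j ^ r j)) ▸ le_iSup₂ (f := fun j (_ : j ≠ i) =>
        LinearMap.ker (Matrix.toLin' (aeval A (φ j ^ r j)))) j (Finset.mem_erase.mp hj).1
  -- finrank bookkeeping
  have hfr : Module.finrank F ↥(LinearMap.ker (aeval f P)) +
      Module.finrank F ↥(LinearMap.ker (aeval f Q)) = Module.finrank F (Fin n → F) := by
    have h2 := Submodule.finrank_sup_add_finrank_inf_eq
      (LinearMap.ker (aeval f P)) (LinearMap.ker (aeval f Q))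
    rw [hsuptop, hdisj.eq_bot, finrank_top, finrank_bot, add_zero] at h2
    omega
  -- the bilinear form
  set B : LinearMap.BilinForm F (Fin n → F) :=
    LinearMap.mk₂ F (fun u v => u ⬝ᵥ v)
      (fun u u' v => add_dotProduct u u' v)
      (fun c u v => smul_dotProduct c u v)
      (fun u v v' => dotProduct_add u v v')
      (fun c u v => dotProduct_smul c u v) with hB
  have hBrefl : B.IsRefl := by
    intro x y h
    simpa [hB, dotProduct_comm y x] using h
  have hBnd : B.Nondegenerate := by
    refine ⟨fun m h => ?_, fun m h => ?_⟩ <;>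
    funext j <;>
    simpa [hB, dotProduct_single, single_dotProduct] using h (Pi.single j 1)
  have horth : orthC (LinearMap.ker (Matrix.toLin' (aeval A P))) =
      B.orthogonal (LinearMap.ker (aeval f P)) := by
    ext u
    rw [← heq]
    exact Iff.rfl
  have hfro : Module.finrank F ↥(B.orthogonal (LinearMap.ker (aeval f P))) =
      Module.finrank F ↥(LinearMap.ker (aeval f Q)) := by
    rw [LinearMap.BilinForm.finrank_orthogonal hBnd]
    have := Submodule.finrank_le (LinearMap.ker (aeval f P))
    omega
  -- the inclusion: RHS ≤ orthC
  have hle : (⨆ (j : Fin k) (_ : j ≠ i),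
      LinearMap.ker (Matrix.toLin' (aeval A (φ j ^ r j)))) ≤
      orthC (LinearMap.ker (Matrix.toLin' (aeval A P))) := by
    refine iSup₂_le fun j hj => ?_
    intro u hu
    intro v hv
    rw [LinearMap.mem_ker, Matrix.toLin'_apply] at hu hv
    obtain ⟨a, b, hab⟩ := hcop i j (Ne.symm hj)
    have h1 : v ⬝ᵥ u = v ⬝ᵥ ((aeval A (a * P)) *ᵥ u) + v ⬝ᵥ ((aeval A (b * (φ j ^ r j))) *ᵥ u) := by
      rw [← dotProduct_add, ← Matrix.add_mulVec, ← map_add, hab]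
      simp
    have h2 : v ⬝ᵥ ((aeval A (b * (φ j ^ r j))) *ᵥ u) = 0 := by
      rw [_root_.map_mul, ← Matrix.mulVec_mulVec, hu, Matrix.mulVec_zero, dotProduct_zero]
    have h3 : v ⬝ᵥ ((aeval A (a * P)) *ᵥ u) = 0 := by
      rw [Matrix.dotProduct_mulVec, ← Matrix.mulVec_transpose, transpose_aeval_aux A hA,
        _root_.map_mul, ← Matrix.mulVec_mulVec, hv, Matrix.mulVec_zero, zero_dotProduct]
    rw [h1, h2, h3, add_zero]
  -- conclude
  rw [hRHS] at hle ⊢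
  rw [horth] at hle ⊢
  refine (Submodule.eq_of_le_of_finrank_le hle ?_).symm
  rw [hfro]
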